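/- Let v be a vertex of a finite directed graph on n vertices, d ≥ 0, and suppose α, ω are integers with 1 < α ≤ r(v) ≤ ω, where r(v) is the number of vertices reachable from v. Define λ_d(v, x) = f_d(v) − γ̃_{d+1}(v) + (d+2)·(x − n_d(v)). Then the inverse closeness (n−1)·f(v)/(r(v)−1)² satisfies (n−1)·f(v)/(r(v)−1)² ≥ (n−1)·min( λ_d(v, α)/(α−1)², λ_d(v, ω)/(ω−1)² ). -/

import Mathlib

open Finset

variable {V : Type*}

/-- `steps r n v w` : there is a walk of length `n` from `v` to `w` along relation `r`. -/
def steps (r : V → V → Prop) : ℕ → V → V → Prop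
  | 0, v, w => v = w
  | n+1, v, w => ∃ u, r v u ∧ steps r n u w

/-- `w` is reachable from `v`. -/
def reach (r : V → V → Prop) (v w : V) : Prop := ∃ n, steps r n v w

/-- shortest-path distance (number of edges). -/
noncomputable def ddist (r : V → V → Prop) (v w : V) : ℕ := sInf {n | steps r n v w}

open scoped Classical in
/-- set of vertices reachable from `v`. -/
noncomputable def Rset (r : V → V → Prop) [Fintype V] (v : V) : Finset V :=
  univ.filter (fun w => reach r v w)

/-- number of vertices reachable from `v`. -/
noncomputable def rnum (r : V → V → Prop) [Fintype V] (v : V) : ℕ := (Rset r v).card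

/-- farness of `v`. -/
noncomputable def farn (r : V → V → Prop) [Fintype V] (v : V) : ℕ :=
  ∑ w ∈ Rset r v, ddist r v w

open scoped Classical in
/-- ball of radius `d` around `v`. -/
noncomputable def ball (r : V → V → Prop) [Fintype V] (v : V) (d : ℕ) : Finset V :=
  univ.filter (fun w => reach r v w ∧ ddist r v w ≤ d)

/-- number of vertices at distance at most `d` from `v`. -/
noncomputable def nball (r : V → V → Prop) [Fintype V] (v : V) (d : ℕ) : ℕ := (ball r v d).card

open scoped Classical in
/-- set of vertices at distance exactly `d` from `v`. -/
noncomputable def sphere (r : V → V → Prop) [Fintype V] (v : V) (d : ℕ) : Finset V :=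
  univ.filter (fun w => reach r v w ∧ ddist r v w = d)

/-- number of vertices at distance exactly `d` from `v`. -/
noncomputable def gam (r : V → V → Prop) [Fintype V] (v : V) (d : ℕ) : ℕ := (sphere r v d).card

/-- farness of `v` restricted to distance at most `d`. -/
noncomputable def fd (r : V → V → Prop) [Fintype V] (v : V) (d : ℕ) : ℕ :=
  ∑ w ∈ ball r v d, ddist r v w

open scoped Classical in
/-- out-degree of `u`. -/
noncomputable def outdeg (r : V → V → Prop) [Fintype V] (u : V) : ℕ :=
  (univ.filter (fun w => r u w)).card

/-- `gtil r v d` = upper bound γ̃_{d+1}(v) = Σ_{u : dist(v,u)=d} outdeg(u). -/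
noncomputable def gtil (r : V → V → Prop) [Fintype V] (v : V) (d : ℕ) : ℕ :=
  ∑ u ∈ sphere r v d, outdeg r u


section AuxLemmas

open scoped Classical

lemma steps_succ' (r : V → V → Prop) (n : ℕ) (v w : V) :
    steps r (n+1) v w ↔ ∃ u, steps r n v u ∧ r u w := by
  induction n generalizing v with
  | zero =>
    constructor
    · rintro ⟨u, h, h0⟩
      cases h0; exact ⟨v, rfl, h⟩
    · rintro ⟨u, h0, h⟩
      cases h0; exact ⟨w, h, rfl⟩
  | succ n ih =>
    constructor
    · rintro ⟨u, hvu, hs⟩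
      obtain ⟨x, hx, hxw⟩ := (ih u).mp hs
      exact ⟨x, ⟨u, hvu, hx⟩, hxw⟩
    · rintro ⟨x, ⟨u, hvu, hx⟩, hxw⟩
      exact ⟨u, hvu, (ih u).mpr ⟨x, hx, hxw⟩⟩

lemma steps_ddist {r : V → V → Prop} {v w : V} (h : reach r v w) :
    steps r (ddist r v w) v w :=
  Nat.sInf_mem h

lemma ddist_le {r : V → V → Prop} {v w : V} {n : ℕ} (h : steps r n v w) :
    ddist r v w ≤ n :=
  Nat.sInf_le h

lemma gam_le_gtil [Fintype V] (r : V → V → Prop) (v : V) (d : ℕ) :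
    gam r v (d+1) ≤ gtil r v d := by
  classical
  have hsub : sphere r v (d+1) ⊆
      (sphere r v d).biUnion (fun u => univ.filter (fun w => r u w)) := by
    intro w hw
    simp only [sphere, mem_filter, mem_univ, true_and] at hw
    obtain ⟨hreach, hdist⟩ := hw
    have hstep : steps r (d+1) v w := by rw [← hdist]; exact steps_ddist hreach
    obtain ⟨u, hu, huw⟩ := (steps_succ' r d v w).mp hstep
    have hru : reach r v u := ⟨d, hu⟩
    have hle : ddist r v u ≤ d := ddist_le hu
    have hge : d ≤ ddist r v u := by
      have hs : steps r (ddist r v u + 1) v w :=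
        (steps_succ' r _ v w).mpr ⟨u, steps_ddist hru, huw⟩
      have := ddist_le hs
      omega
    simp only [mem_biUnion, mem_filter, mem_univ, true_and]
    refine ⟨u, ?_, huw⟩
    simp only [sphere, mem_filter, mem_univ, true_and]
    exact ⟨hru, le_antisymm hle hge⟩
  calc gam r v (d+1) ≤ ((sphere r v d).biUnion (fun u => univ.filter (fun w => r u w))).card :=
        card_le_card hsub
    _ ≤ ∑ u ∈ sphere r v d, (univ.filter (fun w => r u w)).card := card_biUnion_le
    _ = gtil r v d := rfl

lemma farn_bound [Fintype V] (r : V → V → Prop) (v : V) (d : ℕ) :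
    (fd r v d : ℝ) - gtil r v d + ((d : ℝ) + 2) * ((rnum r v : ℝ) - nball r v d)
      ≤ farn r v := by
  classical
  have hball : ball r v d ⊆ Rset r v := by
    intro w hw
    simp only [ball, mem_filter, mem_univ, true_and] at hw
    simp only [Rset, mem_filter, mem_univ, true_and]
    exact hw.1
  have hT : sphere r v (d+1) ⊆ Rset r v \ ball r v d := by
    intro w hw
    simp only [sphere, mem_filter, mem_univ, true_and] at hw
    simp only [mem_sdiff, Rset, ball, mem_filter, mem_univ, true_and]
    refine ⟨hw.1, ?_⟩
    rintro ⟨-, h2⟩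
    rw [hw.2] at h2
    omega
  set S := Rset r v \ ball r v d with hSdef
  set T := sphere r v (d+1) with hTdef
  have h1 : ∑ w ∈ S, (ddist r v w : ℝ) + ∑ w ∈ ball r v d, (ddist r v w : ℝ)
      = (farn r v : ℝ) := by
    rw [farn, Nat.cast_sum, hSdef, Finset.sum_sdiff hball]
  have h2 : ∑ w ∈ ball r v d, (ddist r v w : ℝ) = (fd r v d : ℝ) := by
    rw [fd, Nat.cast_sum]
  have h3 : ∑ w ∈ S \ T, (ddist r v w : ℝ) + ∑ w ∈ T, (ddist r v w : ℝ)
      = ∑ w ∈ S, (ddist r v w : ℝ) := Finset.sum_sdiff hT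
  have h4 : ∑ w ∈ T, (ddist r v w : ℝ) = ((d : ℝ) + 1) * (gam r v (d+1) : ℝ) := by
    rw [Finset.sum_congr rfl (fun w hw => ?_), Finset.sum_const, nsmul_eq_mul, gam, mul_comm]
    simp only [hTdef, sphere, mem_filter, mem_univ, true_and] at hw
    rw [hw.2]; push_cast; ring
  have h5 : ((S \ T).card : ℝ) * ((d : ℝ) + 2) ≤ ∑ w ∈ S \ T, (ddist r v w : ℝ) := by
    rw [← nsmul_eq_mul, ← Finset.sum_const]
    apply Finset.sum_le_sum
    intro w hw
    rw [mem_sdiff] at hw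
    obtain ⟨hwS, hwT⟩ := hw
    rw [hSdef, mem_sdiff] at hwS
    simp only [Rset, ball, mem_filter, mem_univ, true_and] at hwS
    have hreach : reach r v w := hwS.1
    have hgt : d < ddist r v w := by
      by_contra hc
      exact hwS.2 ⟨hreach, by omega⟩
    have hne : ddist r v w ≠ d + 1 := by
      intro hc
      exact hwT (by simp only [hTdef, sphere, mem_filter, mem_univ, true_and]; exact ⟨hreach, hc⟩)
    have : d + 2 ≤ ddist r v w := by omega
    exact_mod_cast this
  have h6 : (S \ T).card + T.card = S.card := by
    rw [Finset.card_sdiff_add_card_eq_card hT]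
  have h6' : ((S \ T).card : ℝ) = (S.card : ℝ) - (gam r v (d+1) : ℝ) := by
    have : ((S \ T).card : ℝ) + (T.card : ℝ) = (S.card : ℝ) := by exact_mod_cast h6
    have hTc : (T.card : ℝ) = (gam r v (d+1) : ℝ) := by rw [hTdef]; rfl
    linarith
  have hnb : nball r v d ≤ rnum r v := card_le_card hball
  have h7 : (S.card : ℝ) = (rnum r v : ℝ) - (nball r v d : ℝ) := by
    rw [hSdef, Finset.card_sdiff_of_subset hball,
      show (Rset r v).card = rnum r v from rfl,
      show (ball r v d).card = nball r v d from rfl, Nat.cast_sub hnb]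
  have h8 : (gam r v (d+1) : ℝ) ≤ (gtil r v d : ℝ) := by
    exact_mod_cast gam_le_gtil r v d
  have h9 : ((d : ℝ) + 2) * ((rnum r v : ℝ) - (nball r v d : ℝ))
      = ((d : ℝ) + 2) * ((S \ T).card : ℝ) + ((d : ℝ) + 2) * (gam r v (d+1) : ℝ) := by
    rw [h6', h7]; ring
  nlinarith [h1, h2, h3, h4, h5, h8, h9]

lemma quad_min {C B a u b : ℝ} (ha : 0 < a) (hau : a ≤ u) (hub : u ≤ b) (hB : 0 ≤ B) :
    min (C*a^2 + B*a) (C*b^2 + B*b) ≤ C*u^2 + B*u := by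
  rcases le_or_gt 0 (C*(u+a)+B) with h | h
  · apply min_le_of_left_le
    nlinarith [mul_nonneg (sub_nonneg.mpr hau) h]
  · apply min_le_of_right_le
    have hC : C < 0 := by nlinarith
    have h2 : C*(b+u)+B < 0 := by nlinarith
    nlinarith [mul_nonneg (sub_nonneg.mpr hub) (neg_nonneg.mpr h2.le)]

lemma g_min {A B x y z : ℝ} (hB : 0 ≤ B) (h1 : 1 < x) (hxy : x ≤ y) (hyz : y ≤ z) :
    min ((A + B*x)/(x-1)^2) ((A + B*z)/(z-1)^2) ≤ (A + B*y)/(y-1)^2 := by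
  have h1y : 1 < y := lt_of_lt_of_le h1 hxy
  have h1z : 1 < z := lt_of_lt_of_le h1y hyz
  have ex : ∀ t : ℝ, 1 < t → (A + B*t)/(t-1)^2 = (A+B)*(1/(t-1))^2 + B*(1/(t-1)) := by
    intro t ht
    have hne : t - 1 ≠ 0 := by intro hc; linarith [sub_eq_zero.mp hc]
    field_simp
    ring
  rw [ex x h1, ex y h1y, ex z h1z, min_comm]
  exact quad_min (one_div_pos.mpr (by linarith))
    (one_div_le_one_div_of_le (by linarith) (by linarith))
    (one_div_le_one_div_of_le (by linarith) (by linarith)) hB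

end AuxLemmas

theorem inverse_closeness_lower_bound [Fintype V] (r : V → V → Prop) (v : V) (d : ℕ)
    (α ω : ℕ) (hα : 1 < α) (h1 : α ≤ rnum r v) (h2 : rnum r v ≤ ω) :
    ((Fintype.card V : ℝ) - 1) * (farn r v : ℝ) / ((rnum r v : ℝ) - 1) ^ 2 ≥
      ((Fintype.card V : ℝ) - 1) *
        min
          (((fd r v d : ℝ) - (gtil r v d : ℝ) + (d + 2) * ((α : ℝ) - (nball r v d : ℝ)))
              / ((α : ℝ) - 1) ^ 2)
          (((fd r v d : ℝ) - (gtil r v d : ℝ) + (d + 2) * ((ω : ℝ) - (nball r v d : ℝ)))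
              / ((ω : ℝ) - 1) ^ 2) := by
  classical
  have hαR : (α : ℝ) ≤ (rnum r v : ℝ) := Nat.cast_le.mpr h1
  have hRω : (rnum r v : ℝ) ≤ (ω : ℝ) := Nat.cast_le.mpr h2
  have h1α : (1:ℝ) < (α : ℝ) := by exact_mod_cast hα
  have h1R : (1:ℝ) < (rnum r v : ℝ) := lt_of_lt_of_le h1α hαR
  have hcard : rnum r v ≤ Fintype.card V := Finset.card_le_univ _
  have hn2 : (2:ℝ) ≤ (Fintype.card V : ℝ) := by
    have : 2 ≤ Fintype.card V := le_trans hα (le_trans h1 hcard)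
    exact_mod_cast this
  set A : ℝ := (fd r v d : ℝ) - (gtil r v d : ℝ) - ((d : ℝ) + 2) * (nball r v d : ℝ) with hA
  have hfb : A + ((d : ℝ) + 2) * (rnum r v : ℝ) ≤ (farn r v : ℝ) := by
    have hh := farn_bound r v d
    have hexp : (fd r v d : ℝ) - (gtil r v d : ℝ)
        + ((d : ℝ) + 2) * ((rnum r v : ℝ) - (nball r v d : ℝ))
        = A + ((d : ℝ) + 2) * (rnum r v : ℝ) := by rw [hA]; ring
    linarith [hh, hexp.ge, hexp.le]
  have hmin : min ((A + ((d : ℝ)+2)*(α : ℝ))/((α : ℝ)-1)^2)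
      ((A + ((d : ℝ)+2)*(ω : ℝ))/((ω : ℝ)-1)^2)
      ≤ (A + ((d : ℝ)+2)*(rnum r v : ℝ))/((rnum r v : ℝ)-1)^2 :=
    g_min (by positivity) h1α hαR hRω
  have hden : (0:ℝ) < ((rnum r v : ℝ) - 1)^2 := by
    have : (0:ℝ) < (rnum r v : ℝ) - 1 := by linarith
    positivity
  have hstep : (A + ((d : ℝ)+2)*(rnum r v : ℝ))/((rnum r v : ℝ)-1)^2
      ≤ (farn r v : ℝ)/((rnum r v : ℝ)-1)^2 := by
    apply div_le_div_of_nonneg_right hfb hden.le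
  rw [ge_iff_le, mul_div_assoc]
  have e1 : (fd r v d : ℝ) - (gtil r v d : ℝ) + ((d : ℝ) + 2) * ((α : ℝ) - (nball r v d : ℝ))
      = A + ((d : ℝ)+2)*(α : ℝ) := by rw [hA]; ring
  have e2 : (fd r v d : ℝ) - (gtil r v d : ℝ) + ((d : ℝ) + 2) * ((ω : ℝ) - (nball r v d : ℝ))
      = A + ((d : ℝ)+2)*(ω : ℝ) := by rw [hA]; ring
  apply mul_le_mul_of_nonneg_left _ (by linarith : (0:ℝ) ≤ (Fintype.card V : ℝ) - 1)
  calc min _ _ = min ((A + ((d : ℝ)+2)*(α : ℝ))/((α : ℝ)-1)^2)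
        ((A + ((d : ℝ)+2)*(ω : ℝ))/((ω : ℝ)-1)^2) := by rw [e1, e2]
    _ ≤ _ := le_trans hmin hstep
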